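/- Let L be a real symmetric connected-graph Laplacian with simple eigenvalue 0 and eigenvector v^[0] = (1/√N)(1,…,1), α > 0, and D* ∈ ℝ^N a constant vector. Consider Θ(t) given by formula (LRT for constant perturbations): Θ(t) = (D*·v^[0])(e^{−αt}/α² − 1/α² + t/α) v^[0] + Σ_{ℓ≥1} (D*·v^[ℓ]/λ^[ℓ])((Δ₋^[ℓ]e^{Δ₊^[ℓ]t} − Δ₊^[ℓ]e^{Δ₋^[ℓ]t})/(2η^[ℓ]) + 1) v^[ℓ], with Δ_±^[ℓ] = −α/2 ± η^[ℓ], η^[ℓ] = √(α²/4 − λ^[ℓ]) ≠ 0. Then Θ solves Θ̈ + αΘ̇ = −LΘ + D* with Θ(0) = 0 and Θ̇(0) = 0. -/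

import Mathlib

open Matrix Complex

private lemma lrt_expD (c : ℂ) (t : ℝ) :
    HasDerivAt (fun s : ℝ => Complex.exp (c * s)) (c * Complex.exp (c * t)) t := by
  have h0 : HasDerivAt (fun z : ℂ => c * z) c (t:ℂ) := by
    simpa using (hasDerivAt_id (t:ℂ)).const_mul c
  have h1 := (Complex.hasDerivAt_exp (c * (t:ℂ))).comp (t:ℂ) h0
  simpa [Function.comp, mul_comm] using h1.comp_ofReal

private lemma lrt_modeF (α : ℝ) (t : ℝ) :
    HasDerivAt (fun s : ℝ => Complex.exp (-(α:ℂ) * s)/(α:ℂ)^2 - 1/(α:ℂ)^2 + (s:ℂ)/(α:ℂ))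
      (-(α:ℂ) * Complex.exp (-(α:ℂ)*t)/(α:ℂ)^2 + 1/(α:ℂ)) t := by
  have h1 := (lrt_expD (-(α:ℂ)) t).div_const ((α:ℂ)^2)
  have h2 : HasDerivAt (fun s : ℝ => (s:ℂ)/(α:ℂ)) (1/(α:ℂ)) t := by
    simpa using (Complex.ofRealCLM.hasDerivAt (x := t)).div_const (α:ℂ)
  exact (h1.sub_const (1/(α:ℂ)^2)).add h2

private lemma lrt_modeF' (α : ℝ) (t : ℝ) :
    HasDerivAt (fun s : ℝ => -(α:ℂ) * Complex.exp (-(α:ℂ)*s)/(α:ℂ)^2 + 1/(α:ℂ))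
      (-(α:ℂ) * (-(α:ℂ) * Complex.exp (-(α:ℂ)*t))/(α:ℂ)^2) t := by
  exact (((lrt_expD (-(α:ℂ)) t).const_mul (-(α:ℂ))).div_const ((α:ℂ)^2)).add_const (1/(α:ℂ))

private lemma lrt_modeG (p m e : ℂ) (t : ℝ) :
    HasDerivAt (fun s : ℝ => (m * Complex.exp (p * s) - p * Complex.exp (m * s))/(2*e) + 1)
      ((m * p * Complex.exp (p*t) - p * m * Complex.exp (m*t))/(2*e)) t := by
  have h := ((((lrt_expD p t).const_mul m).sub ((lrt_expD m t).const_mul p)).div_const (2*e)).add_const (1:ℂ)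
  simpa [mul_assoc] using h

private lemma lrt_modeG' (p m e : ℂ) (t : ℝ) :
    HasDerivAt (fun s : ℝ => (m * p * Complex.exp (p * s) - p * m * Complex.exp (m * s))/(2*e))
      ((m * p * (p * Complex.exp (p*t)) - p * m * (m * Complex.exp (m*t)))/(2*e)) t := by
  exact (((lrt_expD p t).const_mul (m*p)).sub ((lrt_expD m t).const_mul (p*m))).div_const (2*e)

private lemma lrt_complete {N : ℕ} (v : Fin N → Fin N → ℝ)
    (horth : ∀ ℓ ℓ', ∑ j, v ℓ j * v ℓ' j = if ℓ = ℓ' then 1 else 0) :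
    ∀ i j, ∑ ℓ, v ℓ i * v ℓ j = if i = j then 1 else 0 := by
  intro i j
  have h1 : (Matrix.of v) * (Matrix.of v)ᵀ = 1 := by
    ext ℓ ℓ'
    simpa [Matrix.mul_apply, Matrix.one_apply] using horth ℓ ℓ'
  have h2 := mul_eq_one_comm.mp h1
  have := congrFun (congrFun h2 i) j
  simpa [Matrix.mul_apply, Matrix.one_apply, mul_comm] using this

noncomputable def lrtTh1 (N : ℕ) [NeZero N] (lam : Fin N → ℝ) (v : Fin N → Fin N → ℝ)
    (α : ℝ) (η : Fin N → ℂ) (D : Fin N → ℝ) (t : ℝ) (i : Fin N) : ℂ :=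
  (∑ j, (D j : ℂ) * (v 0 j : ℂ)) * (-(α:ℂ) * Complex.exp (-(α:ℂ)*t)/(α:ℂ)^2 + 1/(α:ℂ)) * (v 0 i : ℂ)
  + ∑ ℓ ∈ Finset.univ.erase 0,
      ((∑ j, (D j:ℂ) * (v ℓ j:ℂ))/(lam ℓ:ℂ)) *
        (((-(α:ℂ)/2 - η ℓ) * (-(α:ℂ)/2 + η ℓ) * Complex.exp ((-(α:ℂ)/2 + η ℓ) * t)
          - (-(α:ℂ)/2 + η ℓ) * (-(α:ℂ)/2 - η ℓ) * Complex.exp ((-(α:ℂ)/2 - η ℓ) * t))/(2*η ℓ))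
        * (v ℓ i : ℂ)

noncomputable def lrtTh2 (N : ℕ) [NeZero N] (lam : Fin N → ℝ) (v : Fin N → Fin N → ℝ)
    (α : ℝ) (η : Fin N → ℂ) (D : Fin N → ℝ) (t : ℝ) (i : Fin N) : ℂ :=
  (∑ j, (D j : ℂ) * (v 0 j : ℂ)) * (-(α:ℂ) * (-(α:ℂ) * Complex.exp (-(α:ℂ)*t))/(α:ℂ)^2) * (v 0 i : ℂ)
  + ∑ ℓ ∈ Finset.univ.erase 0,
      ((∑ j, (D j:ℂ) * (v ℓ j:ℂ))/(lam ℓ:ℂ)) *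
        (((-(α:ℂ)/2 - η ℓ) * (-(α:ℂ)/2 + η ℓ) * ((-(α:ℂ)/2 + η ℓ) * Complex.exp ((-(α:ℂ)/2 + η ℓ) * t))
          - (-(α:ℂ)/2 + η ℓ) * (-(α:ℂ)/2 - η ℓ) * ((-(α:ℂ)/2 - η ℓ) * Complex.exp ((-(α:ℂ)/2 - η ℓ) * t)))/(2*η ℓ))
        * (v ℓ i : ℂ)

set_option maxHeartbeats 1000000 in
theorem lrt_constant_perturbation_solution
    (N : ℕ) [NeZero N] (L : Matrix (Fin N) (Fin N) ℝ)
    (hLsymm : L.IsSymm) (hPSD : L.PosSemidef)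
    (lam : Fin N → ℝ) (v : Fin N → Fin N → ℝ)
    (heig : ∀ ℓ, L *ᵥ v ℓ = lam ℓ • v ℓ)
    (horth : ∀ ℓ ℓ', ∑ j, v ℓ j * v ℓ' j = if ℓ = ℓ' then 1 else 0)
    (hlam0 : lam 0 = 0) (hv0 : v 0 = fun _ => 1 / Real.sqrt N)
    (hpos : ∀ ℓ, ℓ ≠ 0 → 0 < lam ℓ)
    (α : ℝ) (hα : 0 < α)
    (η : Fin N → ℂ) (hη2 : ∀ ℓ, η ℓ ^ 2 = ((α ^ 2 / 4 - lam ℓ : ℝ) : ℂ))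
    (hη : ∀ ℓ, ℓ ≠ 0 → η ℓ ≠ 0)
    (D : Fin N → ℝ) :
    let Δp : Fin N → ℂ := fun ℓ => -(α : ℂ) / 2 + η ℓ
    let Δm : Fin N → ℂ := fun ℓ => -(α : ℂ) / 2 - η ℓ
    let Θ : ℝ → Fin N → ℂ := fun t i =>
      ((∑ j, (D j : ℂ) * (v 0 j : ℂ)) *
          (Complex.exp (-(α : ℂ) * (t : ℂ)) / (α : ℂ) ^ 2 - 1 / (α : ℂ) ^ 2
            + (t : ℂ) / (α : ℂ))) * (v 0 i : ℂ)
      + ∑ ℓ ∈ Finset.univ.erase 0,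
          ((∑ j, (D j : ℂ) * (v ℓ j : ℂ)) / (lam ℓ : ℂ)) *
            ((Δm ℓ * Complex.exp (Δp ℓ * (t : ℂ))
              - Δp ℓ * Complex.exp (Δm ℓ * (t : ℂ))) / (2 * η ℓ) + 1) * (v ℓ i : ℂ)
    (∀ i, Θ 0 i = 0) ∧
    (∀ i, deriv (fun s => Θ s i) 0 = 0) ∧
    (∀ i t, HasDerivAt (fun s => Θ s i) (deriv (fun s => Θ s i) t) t) ∧
    (∀ i t, HasDerivAt (deriv (fun s => Θ s i))
      (-(((L.map (algebraMap ℝ ℂ)) *ᵥ (Θ t)) i) + (D i : ℂ)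
        - (α : ℂ) * deriv (fun s => Θ s i) t) t) := by
  intro Δp Δm Θ
  have hΔp : ∀ ℓ, Δp ℓ = -(α:ℂ)/2 + η ℓ := fun _ => rfl
  have hΔm : ∀ ℓ, Δm ℓ = -(α:ℂ)/2 - η ℓ := fun _ => rfl
  have hαC : (α:ℂ) ≠ 0 := Complex.ofReal_ne_zero.mpr hα.ne'
  -- first derivative
  have hd1 : ∀ i t, HasDerivAt (fun s => Θ s i) (lrtTh1 N lam v α η D t i) t := by
    intro i t
    exact HasDerivAt.add
      (((lrt_modeF α t).const_mul (∑ j, (D j : ℂ) * (v 0 j : ℂ))).mul_const ((v 0 i : ℂ)))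
      (HasDerivAt.fun_sum fun ℓ _ =>
        ((lrt_modeG (-(α:ℂ)/2 + η ℓ) (-(α:ℂ)/2 - η ℓ) (η ℓ) t).const_mul
          ((∑ j, (D j:ℂ) * (v ℓ j:ℂ))/(lam ℓ:ℂ))).mul_const ((v ℓ i : ℂ)))
  have hdv : ∀ i t, deriv (fun s => Θ s i) t = lrtTh1 N lam v α η D t i :=
    fun i t => (hd1 i t).deriv
  have hd2 : ∀ i t, HasDerivAt (fun s => lrtTh1 N lam v α η D s i) (lrtTh2 N lam v α η D t i) t := by
    intro i t
    exact HasDerivAt.add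
      (((lrt_modeF' α t).const_mul (∑ j, (D j : ℂ) * (v 0 j : ℂ))).mul_const ((v 0 i : ℂ)))
      (HasDerivAt.fun_sum fun ℓ _ =>
        ((lrt_modeG' (-(α:ℂ)/2 + η ℓ) (-(α:ℂ)/2 - η ℓ) (η ℓ) t).const_mul
          ((∑ j, (D j:ℂ) * (v ℓ j:ℂ))/(lam ℓ:ℂ))).mul_const ((v ℓ i : ℂ)))
  refine ⟨?_, ?_, ?_, ?_⟩
  · -- Θ 0 = 0
    intro i
    show ((∑ j, (D j : ℂ) * (v 0 j : ℂ)) *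
          (Complex.exp (-(α : ℂ) * ((0:ℝ) : ℂ)) / (α : ℂ) ^ 2 - 1 / (α : ℂ) ^ 2
            + ((0:ℝ) : ℂ) / (α : ℂ))) * (v 0 i : ℂ)
      + ∑ ℓ ∈ Finset.univ.erase 0,
          ((∑ j, (D j : ℂ) * (v ℓ j : ℂ)) / (lam ℓ : ℂ)) *
            ((Δm ℓ * Complex.exp (Δp ℓ * ((0:ℝ) : ℂ))
              - Δp ℓ * Complex.exp (Δm ℓ * ((0:ℝ) : ℂ))) / (2 * η ℓ) + 1) * (v ℓ i : ℂ) = 0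
    rw [Complex.ofReal_zero]
    simp only [mul_zero, Complex.exp_zero, zero_div, mul_one]
    have h2 : ∀ ℓ ∈ Finset.univ.erase (0 : Fin N),
        ((∑ j, (D j : ℂ) * (v ℓ j : ℂ)) / (lam ℓ : ℂ)) *
          ((Δm ℓ - Δp ℓ) / (2 * η ℓ) + 1) * (v ℓ i : ℂ) = 0 := by
      intro ℓ hℓ
      have he := hη ℓ (Finset.ne_of_mem_erase hℓ)
      have : (Δm ℓ - Δp ℓ) / (2 * η ℓ) + 1 = 0 := by
        show ((-(α:ℂ)/2 - η ℓ) - (-(α:ℂ)/2 + η ℓ)) / (2 * η ℓ) + 1 = 0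
        field_simp
        ring
      rw [this, mul_zero, zero_mul]
    rw [Finset.sum_eq_zero h2]
    ring
  · -- deriv at 0 = 0
    intro i
    rw [hdv i 0]
    show (∑ j, (D j : ℂ) * (v 0 j : ℂ)) * (-(α:ℂ) * Complex.exp (-(α:ℂ)*((0:ℝ):ℂ))/(α:ℂ)^2 + 1/(α:ℂ)) * (v 0 i : ℂ)
      + ∑ ℓ ∈ Finset.univ.erase 0,
          ((∑ j, (D j:ℂ) * (v ℓ j:ℂ))/(lam ℓ:ℂ)) *
            (((-(α:ℂ)/2 - η ℓ) * (-(α:ℂ)/2 + η ℓ) * Complex.exp ((-(α:ℂ)/2 + η ℓ) * ((0:ℝ):ℂ))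
              - (-(α:ℂ)/2 + η ℓ) * (-(α:ℂ)/2 - η ℓ) * Complex.exp ((-(α:ℂ)/2 - η ℓ) * ((0:ℝ):ℂ)))/(2*η ℓ))
            * (v ℓ i : ℂ) = 0
    rw [Complex.ofReal_zero]
    simp only [mul_zero, Complex.exp_zero, mul_one]
    have h1 : -(α:ℂ)/(α:ℂ)^2 + 1/(α:ℂ) = 0 := by
      field_simp
      ring
    have h2 : ∀ ℓ ∈ Finset.univ.erase (0 : Fin N),
        ((∑ j, (D j:ℂ) * (v ℓ j:ℂ))/(lam ℓ:ℂ)) *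
          (((-(α:ℂ)/2 - η ℓ) * (-(α:ℂ)/2 + η ℓ) - (-(α:ℂ)/2 + η ℓ) * (-(α:ℂ)/2 - η ℓ))/(2*η ℓ))
          * (v ℓ i : ℂ) = 0 := by
      intro ℓ hℓ
      have : ((-(α:ℂ)/2 - η ℓ) * (-(α:ℂ)/2 + η ℓ) - (-(α:ℂ)/2 + η ℓ) * (-(α:ℂ)/2 - η ℓ)) = 0 := by ring
      rw [this, zero_div, mul_zero, zero_mul]
    rw [Finset.sum_eq_zero h2, h1, mul_zero, zero_mul, add_zero]
  · intro i t
    rw [hdv i t]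
    exact hd1 i t
  · intro i t
    have hfun : deriv (fun s => Θ s i) = fun s => lrtTh1 N lam v α η D s i :=
      funext fun s => hdv i s
    rw [hfun]
    -- key algebraic identity
    have heigC : ∀ ℓ (i : Fin N), ∑ j, (L i j : ℂ) * (v ℓ j : ℂ) = (lam ℓ : ℂ) * (v ℓ i : ℂ) := by
      intro ℓ i
      have h := congrFun (heig ℓ) i
      simp only [Matrix.mulVec, dotProduct, Pi.smul_apply, smul_eq_mul] at h
      have := congrArg (Complex.ofReal) h
      push_cast at this
      exact this
    have hcompl := lrt_complete v horth
    have hDdec : (D i : ℂ) = (∑ j, (D j : ℂ) * (v 0 j : ℂ)) * (v 0 i : ℂ)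
        + ∑ ℓ ∈ Finset.univ.erase 0, (∑ j, (D j : ℂ) * (v ℓ j : ℂ)) * (v ℓ i : ℂ) := by
      have hr : D i = (∑ j, D j * v 0 j) * v 0 i
          + ∑ ℓ ∈ Finset.univ.erase 0, (∑ j, D j * v ℓ j) * v ℓ i := by
        have hfull : ∑ ℓ, (∑ j, D j * v ℓ j) * v ℓ i = D i := by
          calc ∑ ℓ, (∑ j, D j * v ℓ j) * v ℓ i
              = ∑ ℓ, ∑ j, D j * (v ℓ j * v ℓ i) := by
                refine Finset.sum_congr rfl fun ℓ _ => ?_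
                rw [Finset.sum_mul]
                exact Finset.sum_congr rfl fun j _ => by ring
            _ = ∑ j, D j * ∑ ℓ, v ℓ j * v ℓ i := by
                rw [Finset.sum_comm]
                exact Finset.sum_congr rfl fun j _ => (Finset.mul_sum _ _ _).symm
            _ = D i := by simp [hcompl]
        rw [← hfull, ← Finset.add_sum_erase Finset.univ _ (Finset.mem_univ 0)]
      have := congrArg (Complex.ofReal) hr
      push_cast at this
      exact this
    have hLO : ((L.map (algebraMap ℝ ℂ)) *ᵥ (Θ t)) i
        = ((∑ j, (D j : ℂ) * (v 0 j : ℂ)) *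
            (Complex.exp (-(α : ℂ) * (t : ℂ)) / (α : ℂ) ^ 2 - 1 / (α : ℂ) ^ 2
              + (t : ℂ) / (α : ℂ))) * ((lam 0 : ℂ) * (v 0 i : ℂ))
          + ∑ ℓ ∈ Finset.univ.erase 0,
              ((∑ j, (D j : ℂ) * (v ℓ j : ℂ)) / (lam ℓ : ℂ) *
                ((Δm ℓ * Complex.exp (Δp ℓ * (t : ℂ))
                  - Δp ℓ * Complex.exp (Δm ℓ * (t : ℂ))) / (2 * η ℓ) + 1))
                * ((lam ℓ : ℂ) * (v ℓ i : ℂ)) := by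
      have expand : ((L.map (algebraMap ℝ ℂ)) *ᵥ (Θ t)) i = ∑ j, (L i j : ℂ) * Θ t j := by
        simp [Matrix.mulVec, dotProduct, Matrix.map_apply]
      rw [expand]
      calc ∑ j, (L i j : ℂ) * Θ t j
          = ∑ j, (((∑ k, (D k : ℂ) * (v 0 k : ℂ)) *
              (Complex.exp (-(α : ℂ) * (t : ℂ)) / (α : ℂ) ^ 2 - 1 / (α : ℂ) ^ 2
                + (t : ℂ) / (α : ℂ))) * ((L i j : ℂ) * (v 0 j : ℂ))
              + ∑ ℓ ∈ Finset.univ.erase 0,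
                ((∑ k, (D k : ℂ) * (v ℓ k : ℂ)) / (lam ℓ : ℂ) *
                  ((Δm ℓ * Complex.exp (Δp ℓ * (t : ℂ))
                    - Δp ℓ * Complex.exp (Δm ℓ * (t : ℂ))) / (2 * η ℓ) + 1))
                  * ((L i j : ℂ) * (v ℓ j : ℂ))) := by
            refine Finset.sum_congr rfl fun j _ => ?_
            show (L i j : ℂ) * Θ t j = _
            have hb : Θ t j = ((∑ k, (D k : ℂ) * (v 0 k : ℂ)) *
                (Complex.exp (-(α : ℂ) * (t : ℂ)) / (α : ℂ) ^ 2 - 1 / (α : ℂ) ^ 2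
                  + (t : ℂ) / (α : ℂ))) * (v 0 j : ℂ)
              + ∑ ℓ ∈ Finset.univ.erase 0,
                  ((∑ k, (D k : ℂ) * (v ℓ k : ℂ)) / (lam ℓ : ℂ)) *
                    ((Δm ℓ * Complex.exp (Δp ℓ * (t : ℂ))
                      - Δp ℓ * Complex.exp (Δm ℓ * (t : ℂ))) / (2 * η ℓ) + 1) * (v ℓ j : ℂ) := rfl
            rw [hb, mul_add, Finset.mul_sum]
            congr 1
            · ring
            · exact Finset.sum_congr rfl fun ℓ _ => by ring
        _ = ((∑ k, (D k : ℂ) * (v 0 k : ℂ)) *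
              (Complex.exp (-(α : ℂ) * (t : ℂ)) / (α : ℂ) ^ 2 - 1 / (α : ℂ) ^ 2
                + (t : ℂ) / (α : ℂ))) * (∑ j, (L i j : ℂ) * (v 0 j : ℂ))
            + ∑ ℓ ∈ Finset.univ.erase 0,
                ((∑ k, (D k : ℂ) * (v ℓ k : ℂ)) / (lam ℓ : ℂ) *
                  ((Δm ℓ * Complex.exp (Δp ℓ * (t : ℂ))
                    - Δp ℓ * Complex.exp (Δm ℓ * (t : ℂ))) / (2 * η ℓ) + 1))
                  * (∑ j, (L i j : ℂ) * (v ℓ j : ℂ)) := by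
            rw [Finset.sum_add_distrib, ← Finset.mul_sum, Finset.sum_comm]
            congr 1
            exact Finset.sum_congr rfl fun ℓ _ => (Finset.mul_sum _ _ _).symm
        _ = _ := by
            rw [heigC 0 i]
            congr 1
            exact Finset.sum_congr rfl fun ℓ _ => by rw [heigC ℓ i]
    rw [hLO, hDdec]
    have key : (-(((∑ j, (D j : ℂ) * (v 0 j : ℂ)) *
            (Complex.exp (-(α : ℂ) * (t : ℂ)) / (α : ℂ) ^ 2 - 1 / (α : ℂ) ^ 2
              + (t : ℂ) / (α : ℂ))) * ((lam 0 : ℂ) * (v 0 i : ℂ))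
          + ∑ ℓ ∈ Finset.univ.erase 0,
              ((∑ j, (D j : ℂ) * (v ℓ j : ℂ)) / (lam ℓ : ℂ) *
                ((Δm ℓ * Complex.exp (Δp ℓ * (t : ℂ))
                  - Δp ℓ * Complex.exp (Δm ℓ * (t : ℂ))) / (2 * η ℓ) + 1))
                * ((lam ℓ : ℂ) * (v ℓ i : ℂ)))
        + ((∑ j, (D j : ℂ) * (v 0 j : ℂ)) * (v 0 i : ℂ)
            + ∑ ℓ ∈ Finset.univ.erase 0, (∑ j, (D j : ℂ) * (v ℓ j : ℂ)) * (v ℓ i : ℂ))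
        - (α : ℂ) * lrtTh1 N lam v α η D t i) = lrtTh2 N lam v α η D t i := by
      have comb : ∀ (T0 U0 W0 : ℂ) (s1 s2 s3 : Fin N → ℂ),
          -(T0 + ∑ ℓ ∈ Finset.univ.erase 0, s1 ℓ)
            + (U0 + ∑ ℓ ∈ Finset.univ.erase 0, s2 ℓ)
            - (α:ℂ)*(W0 + ∑ ℓ ∈ Finset.univ.erase 0, s3 ℓ)
          = (-T0 + U0 - (α:ℂ)*W0)
            + ∑ ℓ ∈ Finset.univ.erase 0, (-(s1 ℓ) + s2 ℓ - (α:ℂ)*(s3 ℓ)) := by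
        intro T0 U0 W0 s1 s2 s3
        simp only [Finset.sum_add_distrib, Finset.sum_sub_distrib, Finset.sum_neg_distrib,
          Finset.mul_sum, mul_add]
        ring
      rw [show ((lam 0 : ℝ) : ℂ) = 0 by rw [hlam0]; norm_num]
      show _ = lrtTh2 N lam v α η D t i
      rw [lrtTh1, lrtTh2, comb]
      congr 1
      · field_simp
        ring
      · refine Finset.sum_congr rfl fun ℓ hℓ => ?_
        have hℓ0 := Finset.ne_of_mem_erase hℓ
        have he := hη ℓ hℓ0
        have hl : ((lam ℓ : ℝ) : ℂ) ≠ 0 := Complex.ofReal_ne_zero.mpr (hpos ℓ hℓ0).ne'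
        have hlc : ((lam ℓ : ℝ) : ℂ) = (α:ℂ)^2/4 - (η ℓ)^2 := by
          have h := hη2 ℓ
          push_cast at h
          linear_combination h
        have hl2 : (α:ℂ)^2/4 - (η ℓ)^2 ≠ 0 := hlc ▸ hl
        clear hd1 hd2 hdv hfun hLO hDdec comb heigC hcompl
        simp only [hΔp, hΔm]
        rw [hlc]
        have hR2 : ((α:ℂ)^2/4 - η ℓ^2) * ((α:ℂ)^2/4 - η ℓ^2)⁻¹ = 1 := mul_inv_cancel₀ hl2
        linear_combination (-((∑ j, (D j:ℂ) * (v ℓ j:ℂ)) * (v ℓ i:ℂ))) * hR2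
    rw [key]
    exact hd2 i t
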